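/- In ℝ² with the Euclidean norm, let R_θ denote rotation about the origin by angle θ, acting as R_θ(u) = (cos θ·u₁ − sin θ·u₂, sin θ·u₁ + cos θ·u₂). Define p₁ := ( (√5 − √(4−√5))/4 , (√(5+2√5) − √(2+3/√5))/4 ), p₁' := (0, √((5+√5)/10)), q₁' := ( (1+√5)/8 , √(10 + 22/√5)/8 ), and for k ≥ 1 set p_k := R_{2π(k−1)/5}(p₁) and p_k' := R_{2π(k−1)/5}(p₁'). For vectors u, w ∈ ℝ² let [u w] be the 2×2 matrix with columns u and w, and define M₁ := [p₄'−p₃', p₁'−p₃'] · [p₁−p₂, p₁'−p₂]⁻¹ and M₂ := [p₅'−p₄', p₁'−p₄'] · [q₁'−p₁, p₁'−p₁]⁻¹. Then det M₁ = det M₂. -/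

import Mathlib

noncomputable section

open Real

/-- The rotation matrix about the origin by angle `θ`. -/
def rotMat (θ : ℝ) : Matrix (Fin 2) (Fin 2) ℝ :=
  !![cos θ, -sin θ; sin θ, cos θ]

/-- `colMat u v` is the 2×2 real matrix whose first column is `u` and
whose second column is `v`. -/
def colMat (u v : EuclideanSpace ℝ (Fin 2)) : Matrix (Fin 2) (Fin 2) ℝ :=
  Matrix.of fun i j => ![u, v] j i

/-- The point `p₁` of the partition of the regular unit pentagon. -/
def pPt (k : ℕ) : EuclideanSpace ℝ (Fin 2) :=
  Matrix.toEuclideanLin (rotMat (2 * π * ((k - 1 : ℕ) : ℝ) / 5))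
    !₂[(sqrt 5 - sqrt (4 - sqrt 5)) / 4,
      (sqrt (5 + 2 * sqrt 5) - sqrt (2 + 3 / sqrt 5)) / 4]

/-- The points `p₁', p₂', …` of the partition of the regular unit pentagon. -/
def pPt' (k : ℕ) : EuclideanSpace ℝ (Fin 2) :=
  Matrix.toEuclideanLin (rotMat (2 * π * ((k - 1 : ℕ) : ℝ) / 5))
    !₂[0, sqrt ((5 + sqrt 5) / 10)]

/-- The point `q₁'` of the partition of the regular unit pentagon. -/
def qPt' : EuclideanSpace ℝ (Fin 2) :=
  !₂[(1 + sqrt 5) / 8, sqrt (10 + 22 / sqrt 5) / 8]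

/-- The matrix mapping the small blue pentagon onto the large blue pentagon. -/
def M0 : Matrix (Fin 2) (Fin 2) ℝ :=
  (‖pPt' 1‖ / ‖pPt 1‖) • rotMat (π / 5)

/-- The matrix mapping the small orange triangle onto the large orange triangle. -/
def M1 : Matrix (Fin 2) (Fin 2) ℝ :=
  colMat (pPt' 4 - pPt' 3) (pPt' 1 - pPt' 3) * (colMat (pPt 1 - pPt 2) (pPt' 1 - pPt 2))⁻¹

/-- The matrix mapping the small yellow triangle onto the large yellow triangle. -/
def M2 : Matrix (Fin 2) (Fin 2) ℝ :=
  colMat (pPt' 5 - pPt' 4) (pPt' 1 - pPt' 4) * (colMat (qPt' - pPt 1) (pPt' 1 - pPt 1))⁻¹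

private lemma det_colMat (u v : EuclideanSpace ℝ (Fin 2)) :
    (colMat u v).det = u 0 * v 1 - v 0 * u 1 := by
  simp [colMat, Matrix.det_fin_two]


set_option maxHeartbeats 1600000 in
private lemma detEqAux (a b c d : ℝ) (ha : a^2 = 5) (ha0 : 0 < a)
    (hb : b^2 = 4 - a) (hb0 : 0 ≤ b) (hc : c^2 = 5 + 2*a) (hc0 : 0 ≤ c)
    (hd5 : 5*d^2 = 10 + 3*a) (hd0 : 0 ≤ d) (A B C D : ℝ)
    (hA : A = (1/2:ℝ)*c)
    (hB : B = (3/32:ℝ)*d + (-1/8:ℝ)*c + (-1/32:ℝ)*(b*c) + (1/32:ℝ)*(a*d)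
      + (1/40:ℝ)*(a*c) + (1/32:ℝ)*(a*(b*c)))
    (hC : C = (-1/4:ℝ)*c + (1/4:ℝ)*a*c)
    (hD : D = (1/32:ℝ)*d + (1/8:ℝ)*c + (3/32:ℝ)*(b*c) + (1/32:ℝ)*(a*d)
      + (-3/40:ℝ)*(a*c) + (-1/32:ℝ)*(a*(b*c))) :
    A * B⁻¹ = C * D⁻¹ := by
  have haL : (2.2:ℝ) < a := by nlinarith
  have haU : a < 2.25 := by nlinarith
  have hbL : (1.32:ℝ) < b := by nlinarith
  have hbU : b < 1.35 := by nlinarith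
  have hcL : (3.06:ℝ) < c := by nlinarith
  have hcU : c < 3.09 := by nlinarith
  have hdL : (1.82:ℝ) < d := by nlinarith
  have hdU : d < 1.84 := by nlinarith
  have hbc : (1.32:ℝ)*3.06 < b*c := by nlinarith
  have hbc' : b*c < 1.35*3.09 := by nlinarith
  have had : (2.2:ℝ)*1.82 < a*d := by nlinarith
  have hac : (2.2:ℝ)*3.06 < a*c := by nlinarith
  have hac' : a*c < 2.25*3.09 := by nlinarith
  have habc : (2.2:ℝ)*(1.32*3.06) < a*(b*c) := by nlinarith
  have habc' : a*(b*c) < 2.25*(1.35*3.09) := by nlinarith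
  have hBpos : (0:ℝ) < B := by rw [hB]; nlinarith [hdL, hcU, hbc', had, hac, habc]
  have hDpos : (0:ℝ) < D := by rw [hD]; nlinarith [hdL, hcL, hbc, had, hac', habc']
  rw [← div_eq_mul_inv, ← div_eq_mul_inv, div_eq_div_iff hBpos.ne' hDpos.ne', hA, hB, hC, hD]
  linear_combination ((-1/128:ℝ)*c*d + (-1/160:ℝ)*c*c + (-1/128:ℝ)*b*c*c) * ha

set_option maxHeartbeats 1600000 in
/-- The linear parts `M₁` and `M₂` of the affine substitution map on the orange and
yellow triangles have equal determinant (equal area-scaling factors), which makes the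
substitution map induce an invariant measure. -/
theorem substitution_matrices_det_eq : M1.det = M2.det := by
  have ha : Real.sqrt 5 ^ 2 = 5 := Real.sq_sqrt (by norm_num)
  have ha0 : (0:ℝ) < Real.sqrt 5 := Real.sqrt_pos.2 (by norm_num)
  have haL : (2.2:ℝ) < Real.sqrt 5 := by nlinarith
  have haU : Real.sqrt 5 < 2.25 := by nlinarith
  -- remaining atoms
  have hb : Real.sqrt (4 - Real.sqrt 5) ^ 2 = 4 - Real.sqrt 5 := Real.sq_sqrt (by linarith)
  have hb0 : (0:ℝ) ≤ Real.sqrt (4 - Real.sqrt 5) := Real.sqrt_nonneg _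
  have hd : Real.sqrt (2 + 3/Real.sqrt 5) ^ 2 = 2 + 3/Real.sqrt 5 := Real.sq_sqrt (by positivity)
  have hd0 : (0:ℝ) ≤ Real.sqrt (2 + 3/Real.sqrt 5) := Real.sqrt_nonneg _
  have hd5 : 5 * Real.sqrt (2 + 3/Real.sqrt 5) ^ 2 = 10 + 3*Real.sqrt 5 := by
    rw [hd]
    field_simp
    linear_combination (-3:ℝ) * ha
  have hc : Real.sqrt (5 + 2*Real.sqrt 5) ^ 2 = 5 + 2*Real.sqrt 5 :=
    Real.sq_sqrt (by positivity)
  have hc0 : (0:ℝ) ≤ Real.sqrt (5 + 2*Real.sqrt 5) := Real.sqrt_nonneg _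
  have hC1 : Real.cos (π/5) = (1 + Real.sqrt 5)/4 := Real.cos_pi_div_five
  have hC2 : Real.cos (2*π/5) = (Real.sqrt 5 - 1)/4 := by
    rw [show (2*π/5 : ℝ) = 2*(π/5) by ring, Real.cos_two_mul, hC1]
    linear_combination (1/8 : ℝ) * ha

  have hS1 : Real.sin (π/5) = (3 - Real.sqrt 5) * Real.sqrt (5 + 2*Real.sqrt 5)/4 := by
    have h1 : (0:ℝ) ≤ Real.sin (π/5) :=
      Real.sin_nonneg_of_nonneg_of_le_pi (by positivity) (by nlinarith [Real.pi_pos])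
    have h2 : (0:ℝ) ≤ (3 - Real.sqrt 5) * Real.sqrt (5 + 2*Real.sqrt 5)/4 :=
      div_nonneg (mul_nonneg (by nlinarith) hc0) (by norm_num)
    rw [← Real.sqrt_sq h1, ← Real.sqrt_sq h2, Real.sin_sq, hC1]
    congr 1
    linear_combination ((11/16:ℝ) + (-1/16:ℝ)*(Real.sqrt (5 + 2*Real.sqrt 5))*(Real.sqrt (5 + 2*Real.sqrt 5))) * ha + ((-7/8:ℝ) + (3/8:ℝ)*(Real.sqrt 5)) * hc
  have hS2 : Real.sin (2*π/5) = (Real.sqrt 5 - 1) * Real.sqrt (5 + 2*Real.sqrt 5)/4 := by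
    have h1 : (0:ℝ) ≤ Real.sin (2*π/5) :=
      Real.sin_nonneg_of_nonneg_of_le_pi (by positivity) (by nlinarith [Real.pi_pos])
    have h2 : (0:ℝ) ≤ (Real.sqrt 5 - 1) * Real.sqrt (5 + 2*Real.sqrt 5)/4 :=
      div_nonneg (mul_nonneg (by nlinarith) hc0) (by norm_num)
    rw [← Real.sqrt_sq h1, ← Real.sqrt_sq h2, Real.sin_sq, hC2]
    congr 1
    linear_combination ((3/16:ℝ) + (-1/16:ℝ)*(Real.sqrt (5 + 2*Real.sqrt 5))*(Real.sqrt (5 + 2*Real.sqrt 5))) * ha + ((-3/8:ℝ) + (1/8:ℝ)*(Real.sqrt 5)) * hc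
  have hr : Real.sqrt ((5 + Real.sqrt 5)/10)
      = (5 - Real.sqrt 5) * Real.sqrt (5 + 2*Real.sqrt 5)/10 := by
    have h2 : (0:ℝ) ≤ (5 - Real.sqrt 5) * Real.sqrt (5 + 2*Real.sqrt 5)/10 :=
      div_nonneg (mul_nonneg (by nlinarith) hc0) (by norm_num)
    rw [show ((5 + Real.sqrt 5)/10 : ℝ)
        = ((5 - Real.sqrt 5) * Real.sqrt (5 + 2*Real.sqrt 5)/10)^2 by
      linear_combination ((1/5:ℝ) + (-1/100:ℝ)*(Real.sqrt (5 + 2*Real.sqrt 5))*(Real.sqrt (5 + 2*Real.sqrt 5))) * ha + ((-3/10:ℝ) + (1/10:ℝ)*(Real.sqrt 5)) * hc, Real.sqrt_sq h2]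
  have hq : Real.sqrt (10 + 22/Real.sqrt 5)
      = (5 + Real.sqrt 5) * Real.sqrt (5 + 2*Real.sqrt 5)/5 := by
    have h2 : (0:ℝ) ≤ (5 + Real.sqrt 5) * Real.sqrt (5 + 2*Real.sqrt 5)/5 := by positivity
    have h22 : (10 + 22/Real.sqrt 5 : ℝ) = (50 + 22*Real.sqrt 5)/5 := by
      field_simp
      linear_combination (-22:ℝ) * ha
    rw [h22, show ((50 + 22*Real.sqrt 5)/5 : ℝ)
        = ((5 + Real.sqrt 5) * Real.sqrt (5 + 2*Real.sqrt 5)/5)^2 by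
      linear_combination ((-4/5:ℝ) + (-1/25:ℝ)*(Real.sqrt (5 + 2*Real.sqrt 5))*(Real.sqrt (5 + 2*Real.sqrt 5))) * ha + ((-6/5:ℝ) + (-2/5:ℝ)*(Real.sqrt 5)) * hc, Real.sqrt_sq h2]

  have hS3 : Real.sin (2*π*2/5) = (3 - Real.sqrt 5) * Real.sqrt (5 + 2*Real.sqrt 5)/4 := by
    rw [show (2*π*2/5 : ℝ) = π - π/5 by ring, Real.sin_pi_sub, hS1]
  have hC3 : Real.cos (2*π*2/5) = -((1 + Real.sqrt 5)/4) := by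
    rw [show (2*π*2/5 : ℝ) = π - π/5 by ring, Real.cos_pi_sub, hC1]
  have hS4 : Real.sin (2*π*3/5) = -((3 - Real.sqrt 5) * Real.sqrt (5 + 2*Real.sqrt 5)/4) := by
    rw [show (2*π*3/5 : ℝ) = π + π/5 by ring, Real.sin_add, Real.sin_pi, Real.cos_pi, hS1]
    ring
  have hC4 : Real.cos (2*π*3/5) = -((1 + Real.sqrt 5)/4) := by
    rw [show (2*π*3/5 : ℝ) = π + π/5 by ring, Real.cos_add, Real.sin_pi, Real.cos_pi, hC1]
    ring
  have hS5 : Real.sin (2*π*4/5) = -((Real.sqrt 5 - 1) * Real.sqrt (5 + 2*Real.sqrt 5)/4) := by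
    rw [show (2*π*4/5 : ℝ) = 2*π - 2*π/5 by ring, Real.sin_two_pi_sub, hS2]
  have hC5 : Real.cos (2*π*4/5) = (Real.sqrt 5 - 1)/4 := by
    rw [show (2*π*4/5 : ℝ) = 2*π - 2*π/5 by ring, Real.cos_two_pi_sub, hC2]
  -- component lemmas
  have e10 : pPt' 1 0 = 0 := by
    simp [pPt', Matrix.toEuclideanLin_apply, PiLp.toLp_apply, WithLp.ofLp_toLp,
      Matrix.mulVec, rotMat, dotProduct, Fin.sum_univ_two, Matrix.vecHead, Matrix.vecTail]
  have e11 : pPt' 1 1 = (5 - Real.sqrt 5) * Real.sqrt (5 + 2*Real.sqrt 5)/10 := by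
    simp [pPt', Matrix.toEuclideanLin_apply, PiLp.toLp_apply, WithLp.ofLp_toLp,
      Matrix.mulVec, rotMat, dotProduct, Fin.sum_univ_two, Matrix.vecHead, Matrix.vecTail, hr]
  have e30 : pPt' 3 0 = -((3 - Real.sqrt 5) * Real.sqrt (5 + 2*Real.sqrt 5)/4
      * ((5 - Real.sqrt 5) * Real.sqrt (5 + 2*Real.sqrt 5)/10)) := by
    simp [pPt', Matrix.toEuclideanLin_apply, PiLp.toLp_apply, WithLp.ofLp_toLp,
      Matrix.mulVec, rotMat, dotProduct, Fin.sum_univ_two, Matrix.vecHead, Matrix.vecTail,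
      hS3, hC3, hr]
    ring
  have e31 : pPt' 3 1 = -((1 + Real.sqrt 5)/4 * ((5 - Real.sqrt 5) * Real.sqrt (5 + 2*Real.sqrt 5)/10)) := by
    simp [pPt', Matrix.toEuclideanLin_apply, PiLp.toLp_apply, WithLp.ofLp_toLp,
      Matrix.mulVec, rotMat, dotProduct, Fin.sum_univ_two, Matrix.vecHead, Matrix.vecTail,
      hS3, hC3, hr]
    ring
  have e40 : pPt' 4 0 = (3 - Real.sqrt 5) * Real.sqrt (5 + 2*Real.sqrt 5)/4
      * ((5 - Real.sqrt 5) * Real.sqrt (5 + 2*Real.sqrt 5)/10) := by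
    simp [pPt', Matrix.toEuclideanLin_apply, PiLp.toLp_apply, WithLp.ofLp_toLp,
      Matrix.mulVec, rotMat, dotProduct, Fin.sum_univ_two, Matrix.vecHead, Matrix.vecTail,
      hS4, hC4, hr]
    ring
  have e41 : pPt' 4 1 = -((1 + Real.sqrt 5)/4 * ((5 - Real.sqrt 5) * Real.sqrt (5 + 2*Real.sqrt 5)/10)) := by
    simp [pPt', Matrix.toEuclideanLin_apply, PiLp.toLp_apply, WithLp.ofLp_toLp,
      Matrix.mulVec, rotMat, dotProduct, Fin.sum_univ_two, Matrix.vecHead, Matrix.vecTail,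
      hS4, hC4, hr]
    ring
  have e50 : pPt' 5 0 = (Real.sqrt 5 - 1) * Real.sqrt (5 + 2*Real.sqrt 5)/4
      * ((5 - Real.sqrt 5) * Real.sqrt (5 + 2*Real.sqrt 5)/10) := by
    simp [pPt', Matrix.toEuclideanLin_apply, PiLp.toLp_apply, WithLp.ofLp_toLp,
      Matrix.mulVec, rotMat, dotProduct, Fin.sum_univ_two, Matrix.vecHead, Matrix.vecTail,
      hS5, hC5, hr]
    ring
  have e51 : pPt' 5 1 = (Real.sqrt 5 - 1)/4 * ((5 - Real.sqrt 5) * Real.sqrt (5 + 2*Real.sqrt 5)/10) := by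
    simp [pPt', Matrix.toEuclideanLin_apply, PiLp.toLp_apply, WithLp.ofLp_toLp,
      Matrix.mulVec, rotMat, dotProduct, Fin.sum_univ_two, Matrix.vecHead, Matrix.vecTail,
      hS5, hC5, hr]
    ring
  have p10 : pPt 1 0 = (Real.sqrt 5 - Real.sqrt (4 - Real.sqrt 5))/4 := by
    simp [pPt, Matrix.toEuclideanLin_apply, PiLp.toLp_apply, WithLp.ofLp_toLp,
      Matrix.mulVec, rotMat, dotProduct, Fin.sum_univ_two, Matrix.vecHead, Matrix.vecTail]
  have p11 : pPt 1 1 = (Real.sqrt (5 + 2*Real.sqrt 5) - Real.sqrt (2 + 3/Real.sqrt 5))/4 := by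
    simp [pPt, Matrix.toEuclideanLin_apply, PiLp.toLp_apply, WithLp.ofLp_toLp,
      Matrix.mulVec, rotMat, dotProduct, Fin.sum_univ_two, Matrix.vecHead, Matrix.vecTail]
  have p20 : pPt 2 0 = (Real.sqrt 5 - 1)/4 * ((Real.sqrt 5 - Real.sqrt (4 - Real.sqrt 5))/4)
      - (Real.sqrt 5 - 1) * Real.sqrt (5 + 2*Real.sqrt 5)/4
        * ((Real.sqrt (5 + 2*Real.sqrt 5) - Real.sqrt (2 + 3/Real.sqrt 5))/4) := by
    simp [pPt, Matrix.toEuclideanLin_apply, PiLp.toLp_apply, WithLp.ofLp_toLp,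
      Matrix.mulVec, rotMat, dotProduct, Fin.sum_univ_two, Matrix.vecHead, Matrix.vecTail,
      hS2, hC2]
    ring
  have p21 : pPt 2 1 = (Real.sqrt 5 - 1) * Real.sqrt (5 + 2*Real.sqrt 5)/4
        * ((Real.sqrt 5 - Real.sqrt (4 - Real.sqrt 5))/4)
      + (Real.sqrt 5 - 1)/4 * ((Real.sqrt (5 + 2*Real.sqrt 5) - Real.sqrt (2 + 3/Real.sqrt 5))/4) := by
    simp [pPt, Matrix.toEuclideanLin_apply, PiLp.toLp_apply, WithLp.ofLp_toLp,
      Matrix.mulVec, rotMat, dotProduct, Fin.sum_univ_two, Matrix.vecHead, Matrix.vecTail,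
      hS2, hC2]
    ring
  have q0 : qPt' 0 = (1 + Real.sqrt 5)/8 := by
    simp [qPt']
  have q1 : qPt' 1 = (5 + Real.sqrt 5) * Real.sqrt (5 + 2*Real.sqrt 5)/5/8 := by
    simp [qPt', hq]
  -- reduce the goal to scalars
  rw [M1, M2, Matrix.det_mul, Matrix.det_mul, Matrix.det_nonsing_inv, Matrix.det_nonsing_inv,
    Ring.inverse_eq_inv, Ring.inverse_eq_inv, det_colMat, det_colMat, det_colMat, det_colMat]
  simp only [PiLp.sub_apply]
  rw [e10, e11, e30, e31, e40, e41, e50, e51, p10, p11, p20, p21, q0, q1]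
  apply detEqAux (Real.sqrt 5) (Real.sqrt (4 - Real.sqrt 5)) (Real.sqrt (5 + 2*Real.sqrt 5)) (Real.sqrt (2 + 3/Real.sqrt 5)) ha ha0 hb hb0 hc hc0 hd5 hd0
  · linear_combination ((-2/5:ℝ)*(Real.sqrt (5 + 2*Real.sqrt 5)) + (1/160:ℝ)*(Real.sqrt (5 + 2*Real.sqrt 5))*(Real.sqrt (5 + 2*Real.sqrt 5))*(Real.sqrt (5 + 2*Real.sqrt 5)) + (1/100:ℝ)*(Real.sqrt 5)*(Real.sqrt (5 + 2*Real.sqrt 5))*(Real.sqrt (5 + 2*Real.sqrt 5))*(Real.sqrt (5 + 2*Real.sqrt 5)) + (-1/800:ℝ)*(Real.sqrt 5)*(Real.sqrt 5)*(Real.sqrt (5 + 2*Real.sqrt 5))*(Real.sqrt (5 + 2*Real.sqrt 5))*(Real.sqrt (5 + 2*Real.sqrt 5))) * ha + ((1/2:ℝ)*(Real.sqrt (5 + 2*Real.sqrt 5)) + (-1/5:ℝ)*(Real.sqrt 5)*(Real.sqrt (5 + 2*Real.sqrt 5))) * hc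
  · linear_combination ((-1/80:ℝ)*(Real.sqrt (2 + 3/Real.sqrt 5)) + (1/320:ℝ)*(Real.sqrt (5 + 2*Real.sqrt 5)) + (1/160:ℝ)*(Real.sqrt (5 + 2*Real.sqrt 5))*(Real.sqrt (5 + 2*Real.sqrt 5))*(Real.sqrt (2 + 3/Real.sqrt 5)) + (-1/160:ℝ)*(Real.sqrt (5 + 2*Real.sqrt 5))*(Real.sqrt (5 + 2*Real.sqrt 5))*(Real.sqrt (5 + 2*Real.sqrt 5)) + (1/40:ℝ)*(Real.sqrt (4 - Real.sqrt 5))*(Real.sqrt (5 + 2*Real.sqrt 5)) + (-3/320:ℝ)*(Real.sqrt 5)*(Real.sqrt (5 + 2*Real.sqrt 5))) * ha + ((1/64:ℝ)*(Real.sqrt (5 + 2*Real.sqrt 5)) + (-1/64:ℝ)*(Real.sqrt 5)*(Real.sqrt (5 + 2*Real.sqrt 5))) * hb + ((1/32:ℝ)*(Real.sqrt (2 + 3/Real.sqrt 5)) + (-3/64:ℝ)*(Real.sqrt (5 + 2*Real.sqrt 5)) + (-1/160:ℝ)*(Real.sqrt 5)*(Real.sqrt (2 + 3/Real.sqrt 5))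 + (7/320:ℝ)*(Real.sqrt 5)*(Real.sqrt (5 + 2*Real.sqrt 5))) * hc + ((1/320:ℝ)*(Real.sqrt (5 + 2*Real.sqrt 5)) + (-1/320:ℝ)*(Real.sqrt 5)*(Real.sqrt (5 + 2*Real.sqrt 5))) * hd5
  · linear_combination ((7/10:ℝ)*(Real.sqrt (5 + 2*Real.sqrt 5)) + (-7/80:ℝ)*(Real.sqrt (5 + 2*Real.sqrt 5))*(Real.sqrt (5 + 2*Real.sqrt 5))*(Real.sqrt (5 + 2*Real.sqrt 5)) + (3/400:ℝ)*(Real.sqrt 5)*(Real.sqrt (5 + 2*Real.sqrt 5))*(Real.sqrt (5 + 2*Real.sqrt 5))*(Real.sqrt (5 + 2*Real.sqrt 5))) * ha + ((-3/4:ℝ)*(Real.sqrt (5 + 2*Real.sqrt 5)) + (7/20:ℝ)*(Real.sqrt 5)*(Real.sqrt (5 + 2*Real.sqrt 5))) * hc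
  · linear_combination ((3/160:ℝ)*(Real.sqrt (5 + 2*Real.sqrt 5))) * ha


end
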